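/- Suppose (x*, u*) is a local minimizer of the continuous optimal control problem (P) with costate λ*, assumptions (A2)–(A3) hold, and for each N ≥ 2 the Radau quadrature rule of order N satisfies (P1). Then there exists a constant c, independent of N, such that for every N and every right-hand side y, the solution (X, U) of the quadratic program (QP) satisfies ‖X‖_ω ≤ c ‖y‖_∞ and ‖U‖_ω ≤ c ‖y‖_∞. -/

import Mathlib

open Polynomial Matrix Set

noncomputable section

/-- Euclidean norm of a finite real vector. -/
def enorm' {k : ℕ} (v : Fin k → ℝ) : ℝ := Real.sqrt (∑ i, (v i) ^ 2)

/-- Gradient of a scalar function on `ℝ^k` (vector of partial derivatives). -/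
def pgrad {k : ℕ} (g : (Fin k → ℝ) → ℝ) (x : Fin k → ℝ) : Fin k → ℝ :=
  fun i => fderiv ℝ g x (Pi.single i 1)

/-- The Hamiltonian `H(x,u,λ) = λᵀ f(x,u)`. -/
def ham {n m : ℕ} (f : (Fin n → ℝ) → (Fin m → ℝ) → Fin n → ℝ)
    (x : Fin n → ℝ) (u : Fin m → ℝ) (lam : Fin n → ℝ) : ℝ :=
  ∑ l, lam l * f x u l

/-- `∇_x H`. -/
def gradxH {n m : ℕ} (f : (Fin n → ℝ) → (Fin m → ℝ) → Fin n → ℝ)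
    (x : Fin n → ℝ) (u : Fin m → ℝ) (lam : Fin n → ℝ) : Fin n → ℝ :=
  pgrad (fun x' => ham f x' u lam) x

/-- `∇_u H`. -/
def graduH {n m : ℕ} (f : (Fin n → ℝ) → (Fin m → ℝ) → Fin n → ℝ)
    (x : Fin n → ℝ) (u : Fin m → ℝ) (lam : Fin n → ℝ) : Fin m → ℝ :=
  pgrad (fun u' => ham f x u' lam) u

/-- Jacobian `∇_x f` (an `n×n` matrix whose `k`-th row is `(∇_x f_k)ᵀ`). -/
def jacX {n m : ℕ} (f : (Fin n → ℝ) → (Fin m → ℝ) → Fin n → ℝ)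
    (x : Fin n → ℝ) (u : Fin m → ℝ) : Matrix (Fin n) (Fin n) ℝ :=
  fun k l => fderiv ℝ (fun x' => f x' u k) x (Pi.single l 1)

/-- Jacobian `∇_u f`. -/
def jacU {n m : ℕ} (f : (Fin n → ℝ) → (Fin m → ℝ) → Fin n → ℝ)
    (x : Fin n → ℝ) (u : Fin m → ℝ) : Matrix (Fin n) (Fin m) ℝ :=
  fun k l => fderiv ℝ (fun u' => f x u' k) u (Pi.single l 1)

/-- Hessian `∇_{xx} H`. -/
def hessXX {n m : ℕ} (f : (Fin n → ℝ) → (Fin m → ℝ) → Fin n → ℝ)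
    (x : Fin n → ℝ) (u : Fin m → ℝ) (lam : Fin n → ℝ) : Matrix (Fin n) (Fin n) ℝ :=
  fun k l => fderiv ℝ (fun x' => gradxH f x' u lam l) x (Pi.single k 1)

/-- Hessian `∇_{xu} H` (`n×m`). -/
def hessXU {n m : ℕ} (f : (Fin n → ℝ) → (Fin m → ℝ) → Fin n → ℝ)
    (x : Fin n → ℝ) (u : Fin m → ℝ) (lam : Fin n → ℝ) : Matrix (Fin n) (Fin m) ℝ :=
  fun k l => fderiv ℝ (fun u' => gradxH f x u' lam k) u (Pi.single l 1)

/-- Hessian `∇_{uu} H`. -/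
def hessUU {n m : ℕ} (f : (Fin n → ℝ) → (Fin m → ℝ) → Fin n → ℝ)
    (x : Fin n → ℝ) (u : Fin m → ℝ) (lam : Fin n → ℝ) : Matrix (Fin m) (Fin m) ℝ :=
  fun k l => fderiv ℝ (fun u' => graduH f x u' lam k) u (Pi.single l 1)

/-- Hessian `∇² C`. -/
def hessC {n : ℕ} (C : (Fin n → ℝ) → ℝ) (x : Fin n → ℝ) : Matrix (Fin n) (Fin n) ℝ :=
  fun k l => fderiv ℝ (fun x' => pgrad C x' l) x (Pi.single k 1)

/-- The differentiation matrix for nodes `σ 0, …, σ N`: `D i j = L̇_j(σ (i+1))`. -/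
def diffMat (N : ℕ) (σ : Fin (N + 1) → ℝ) : Matrix (Fin N) (Fin (N + 1)) ℝ :=
  fun i j => (derivative (Lagrange.basis Finset.univ σ j)).eval (σ i.succ)

/-- The square submatrix of `D` formed by columns `1` through `N`. -/
def diffMat1N (N : ℕ) (σ : Fin (N + 1) → ℝ) : Matrix (Fin N) (Fin N) ℝ :=
  fun i j => diffMat N σ i j.succ

/-- The matrix `D‡` with entries `D‡_{ij} = -(ω_j/ω_i) D_{ji}`. -/
def ddagMat (N : ℕ) (σ : Fin (N + 1) → ℝ) (ω : Fin N → ℝ) :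
    Matrix (Fin N) (Fin N) ℝ :=
  fun i j => -(ω j / ω i) * diffMat N σ j i.succ

/-- `(τ; ω)` is a Radau quadrature rule of order `N`: nodes
`-1 < τ_1 < … < τ_N = 1`, positive weights, and the quadrature is exact for
polynomials of degree at most `2N-2`. -/
def IsRadauRule (N : ℕ) (τ ω : Fin N → ℝ) : Prop :=
  StrictMono τ ∧ (∀ i, -1 < τ i) ∧ (∀ i, τ i ≤ 1) ∧ (∃ i, τ i = 1) ∧
  (∀ i, 0 < ω i) ∧
  ∀ q : Polynomial ℝ, q.degree ≤ (2 * N - 2 : ℕ) →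
    ∫ t in (-1:ℝ)..1, q.eval t = ∑ i, ω i * q.eval (τ i)

/-- The linearized KKT map `∇T*` of the Radau discretization, linearized at
`(x*, u*, λ*)` evaluated along the collocation points. -/
def gradTstar (n m N : ℕ) (hN : 0 < N)
    (f : (Fin n → ℝ) → (Fin m → ℝ) → Fin n → ℝ) (C : (Fin n → ℝ) → ℝ)
    (xs : ℝ → Fin n → ℝ) (us : ℝ → Fin m → ℝ) (lams : ℝ → Fin n → ℝ)
    (τ ω : Fin N → ℝ) :
    ((Fin (N + 1) → Fin n → ℝ) × (Fin N → Fin m → ℝ) × (Fin (N + 1) → Fin n → ℝ)) →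
    ((Fin N → Fin n → ℝ) × (Fin n → ℝ) × (Fin n → ℝ) ×
      (Fin (N - 1) → Fin n → ℝ) × (Fin n → ℝ) × (Fin N → Fin m → ℝ)) :=
  fun XUL =>
    let X := XUL.1; let U := XUL.2.1; let Λ := XUL.2.2
    let σ : Fin (N + 1) → ℝ := Fin.cons (-1) τ
    let A : Fin N → Matrix (Fin n) (Fin n) ℝ := fun i => jacX f (xs (τ i)) (us (τ i))
    let B : Fin N → Matrix (Fin n) (Fin m) ℝ := fun i => jacU f (xs (τ i)) (us (τ i))
    let Q : Fin N → Matrix (Fin n) (Fin n) ℝ :=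
      fun i => hessXX f (xs (τ i)) (us (τ i)) (lams (τ i))
    let S : Fin N → Matrix (Fin n) (Fin m) ℝ :=
      fun i => hessXU f (xs (τ i)) (us (τ i)) (lams (τ i))
    let R : Fin N → Matrix (Fin m) (Fin m) ℝ :=
      fun i => hessUU f (xs (τ i)) (us (τ i)) (lams (τ i))
    let T : Matrix (Fin n) (Fin n) ℝ := hessC C (xs 1)
    let lastN : Fin N := ⟨N - 1, Nat.sub_lt hN one_pos⟩
    ( -- (1)
      fun i => (∑ j, diffMat N σ i j • X j) - (A i).mulVec (X i.succ)
        - (B i).mulVec (U i),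
      -- (2)
      X 0,
      -- (3)
      Λ 0 - T.mulVec (X (Fin.last N)) -
        ∑ i : Fin N, ω i •
          ((A i)ᵀ.mulVec (Λ i.succ) + (Q i).mulVec (X i.succ) + (S i).mulVec (U i)),
      -- (4)
      fun i : Fin (N - 1) =>
        let i' : Fin N := Fin.castLE (Nat.sub_le N 1) i
        (∑ j, ddagMat N σ ω i' j • Λ j.succ) + (A i')ᵀ.mulVec (Λ i'.succ)
          + (Q i').mulVec (X i'.succ) + (S i').mulVec (U i'),
      -- (5)
      (∑ j, ddagMat N σ ω lastN j • Λ j.succ) + (A lastN)ᵀ.mulVec (Λ lastN.succ)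
        + (Q lastN).mulVec (X lastN.succ) + (S lastN).mulVec (U lastN)
        + (1 / ω lastN) • T.mulVec (X (Fin.last N)),
      -- (6)
      fun i => (S i)ᵀ.mulVec (X i.succ) + (R i).mulVec (U i)
        + (B i)ᵀ.mulVec (Λ i.succ) )


/-- Feasibility in the quadratic program (QP): the linearized collocated
dynamics with inhomogeneity `y₁` and initial condition `X₀ = y₂`. -/
def qpFeasible (n m N : ℕ)
    (f : (Fin n → ℝ) → (Fin m → ℝ) → Fin n → ℝ)
    (xs : ℝ → Fin n → ℝ) (us : ℝ → Fin m → ℝ)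
    (τ : Fin N → ℝ)
    (y1 : Fin N → Fin n → ℝ) (y2 : Fin n → ℝ)
    (X : Fin (N + 1) → Fin n → ℝ) (U : Fin N → Fin m → ℝ) : Prop :=
  (∀ i : Fin N,
    (∑ j, diffMat N (Fin.cons (-1) τ) i j • X j) =
      (jacX f (xs (τ i)) (us (τ i))).mulVec (X i.succ) +
      (jacU f (xs (τ i)) (us (τ i))).mulVec (U i) + y1 i) ∧
  X 0 = y2

/-- Objective `½𝒬(X,U) + ℒ(X,U)` of the quadratic program (QP); here
`y₄` lists the blocks `y_{41}, …, y_{4,N-1}, y_5` (i.e. `y_{4N} = y_5`). -/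
def qpObjective (n m N : ℕ)
    (f : (Fin n → ℝ) → (Fin m → ℝ) → Fin n → ℝ) (C : (Fin n → ℝ) → ℝ)
    (xs : ℝ → Fin n → ℝ) (us : ℝ → Fin m → ℝ) (lams : ℝ → Fin n → ℝ)
    (τ ω : Fin N → ℝ)
    (y3 : Fin n → ℝ) (y4 : Fin N → Fin n → ℝ) (y6 : Fin N → Fin m → ℝ)
    (X : Fin (N + 1) → Fin n → ℝ) (U : Fin N → Fin m → ℝ) : ℝ :=
  (1 / 2) * ((∑ k, ∑ l, X (Fin.last N) k * hessC C (xs 1) k l * X (Fin.last N) l) +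
      ∑ i : Fin N, ω i *
        ((∑ k, ∑ l, X i.succ k *
            hessXX f (xs (τ i)) (us (τ i)) (lams (τ i)) k l * X i.succ l) +
         2 * (∑ k, ∑ l, X i.succ k *
            hessXU f (xs (τ i)) (us (τ i)) (lams (τ i)) k l * U i l) +
         ∑ k, ∑ l, U i k *
            hessUU f (xs (τ i)) (us (τ i)) (lams (τ i)) k l * U i l)) +
    ((∑ k, X 0 k * (y3 k + ∑ i : Fin N, ω i * y4 i k)) -
      ∑ i : Fin N, ω i * ((∑ k, y4 i k * X i.succ k) + ∑ l, y6 i l * U i l))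
section QPHelpers

open Finset

lemma enorm'_nonneg {k : ℕ} (v : Fin k → ℝ) : 0 ≤ enorm' v := Real.sqrt_nonneg _

lemma abs_le_enorm' {k : ℕ} (v : Fin k → ℝ) (i : Fin k) : |v i| ≤ enorm' v := by
  rw [← Real.sqrt_sq_eq_abs]
  exact Real.sqrt_le_sqrt (Finset.single_le_sum
    (f := fun j => v j ^ 2) (fun j _ => sq_nonneg _) (Finset.mem_univ i))

lemma cs_enorm' {k : ℕ} (v w : Fin k → ℝ) : |∑ i, v i * w i| ≤ enorm' v * enorm' w := by
  calc |∑ i, v i * w i| ≤ ∑ i, |v i| * |w i| := by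
        refine (Finset.abs_sum_le_sum_abs _ _).trans ?_
        exact Finset.sum_le_sum fun i _ => le_of_eq (abs_mul _ _)
    _ ≤ Real.sqrt (∑ i, |v i| ^ 2) * Real.sqrt (∑ i, |w i| ^ 2) :=
        Real.sum_mul_le_sqrt_mul_sqrt _ _ _
    _ = enorm' v * enorm' w := by simp [enorm', sq_abs]

lemma weighted_cs {k : ℕ} (ω c : Fin k → ℝ) (hω : ∀ i, 0 ≤ ω i) (hc : ∀ i, 0 ≤ c i) :
    ∑ i, ω i * c i ≤ Real.sqrt (∑ i, ω i) * Real.sqrt (∑ i, ω i * c i ^ 2) := by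
  have h := Real.sum_mul_le_sqrt_mul_sqrt Finset.univ
    (fun i => Real.sqrt (ω i)) (fun i => Real.sqrt (ω i) * c i)
  simp only [mul_pow, Real.sq_sqrt (hω _)] at h
  calc ∑ i, ω i * c i = ∑ i, Real.sqrt (ω i) * (Real.sqrt (ω i) * c i) := by
        refine Finset.sum_congr rfl fun i _ => ?_
        rw [← mul_assoc, Real.mul_self_sqrt (hω _)]
    _ ≤ _ := h

lemma quad_solve {α K y s : ℝ} (hα : 0 < α) (hK : 0 ≤ K) (hy : 0 ≤ y) (hs : 0 ≤ s)
    (h : α / 2 * s ^ 2 ≤ K * y ^ 2 + 2 * Real.sqrt 2 * y * s) :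
    s ≤ Real.sqrt (4 / α * (K + 8 / α)) * y := by
  have hα4 : (0:ℝ) < α / 4 := by linarith
  have h8 : (0:ℝ) ≤ 8 / α := by positivity
  have key : α / 4 * s ^ 2 ≤ (K + 8 / α) * y ^ 2 := by
    have h1 : Real.sqrt (α / 4) * Real.sqrt (8 / α) = Real.sqrt 2 := by
      rw [← Real.sqrt_mul (by positivity)]
      congr 1
      field_simp
      ring
    have h2 := sq_nonneg (Real.sqrt (α / 4) * s - Real.sqrt (8 / α) * y)
    have h3 : Real.sqrt (α / 4) ^ 2 = α / 4 := Real.sq_sqrt (by positivity)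
    have h4 : Real.sqrt (8 / α) ^ 2 = 8 / α := Real.sq_sqrt h8
    have e : (Real.sqrt (α / 4) * s - Real.sqrt (8 / α) * y) ^ 2 =
        Real.sqrt (α / 4) ^ 2 * s ^ 2 -
          2 * (Real.sqrt (α / 4) * Real.sqrt (8 / α)) * (s * y) +
          Real.sqrt (8 / α) ^ 2 * y ^ 2 := by ring
    rw [e, h1, h3, h4] at h2
    linarith [h, h2]
  have hs2 : s ^ 2 ≤ 4 / α * (K + 8 / α) * y ^ 2 := by
    have h5 := mul_le_mul_of_nonneg_left key (le_of_lt (show (0:ℝ) < 4 / α by positivity))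
    have h6 : 4 / α * (α / 4 * s ^ 2) = s ^ 2 := by field_simp
    rw [h6] at h5
    linarith [h5]
  calc s = Real.sqrt (s ^ 2) := (Real.sqrt_sq hs).symm
    _ ≤ Real.sqrt (4 / α * (K + 8 / α) * y ^ 2) := Real.sqrt_le_sqrt hs2
    _ = Real.sqrt (4 / α * (K + 8 / α)) * y := by
        rw [Real.sqrt_mul (by positivity), Real.sqrt_sq hy]

lemma solve_linear {n N : ℕ} (Dm : Matrix (Fin N) (Fin N) ℝ)
    (hD : IsUnit Dm) (hDinv : ∀ i, ∑ j, |Dm⁻¹ i j| ≤ 2)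
    (A : Fin N → Matrix (Fin n) (Fin n) ℝ) (hA : ∀ i k, ∑ l, |A i k l| ≤ 1 / 4)
    (b : Fin N → Fin n → ℝ) (β : ℝ) (hβ : 0 ≤ β) (hb : ∀ i k, |b i k| ≤ β) :
    ∃ Z : Fin N → Fin n → ℝ,
      (∀ i, ∑ j, Dm i j • Z j = (A i).mulVec (Z i) + b i) ∧ ∀ i k, |Z i k| ≤ 4 * β := by
  rcases Nat.eq_zero_or_pos n with hn | hn
  · subst hn
    refine ⟨0, fun i => funext fun k => k.elim0, fun i k => k.elim0⟩
  rcases Nat.eq_zero_or_pos N with hN | hN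
  · refine ⟨0, fun i => absurd i.2 (by omega), fun i k => absurd i.2 (by omega)⟩
  haveI : Nonempty (Fin N) := ⟨⟨0, hN⟩⟩
  haveI : Nonempty (Fin n) := ⟨⟨0, hn⟩⟩
  have hdet : IsUnit Dm.det := (Matrix.isUnit_iff_isUnit_det _).1 hD
  -- a priori bound
  have sbound : ∀ (Z b' : Fin N → Fin n → ℝ) (γ : ℝ), 0 ≤ γ → (∀ i k, |b' i k| ≤ γ) →
      (∀ i, ∑ j, Dm i j • Z j = (A i).mulVec (Z i) + b' i) → ∀ i k, |Z i k| ≤ 4 * γ := by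
    intro Z b' γ hγ hb' heq
    obtain ⟨p, -, hmax⟩ := Finset.exists_max_image Finset.univ
      (fun p : Fin N × Fin n => |Z p.1 p.2|) Finset.univ_nonempty
    set s := |Z p.1 p.2| with hsdef
    have hs0 : 0 ≤ s := abs_nonneg _
    have hsle : ∀ i k, |Z i k| ≤ s := fun i k => hmax (i, k) (Finset.mem_univ _)
    have hrep : ∀ k : Fin n, (fun j => Z j k) =
        Dm⁻¹.mulVec (fun j => ((A j).mulVec (Z j) + b' j) k) := by
      intro k
      have hmv : Dm.mulVec (fun j => Z j k) = fun i => ((A i).mulVec (Z i) + b' i) k := by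
        funext i
        have := congrFun (heq i) k
        simpa [Matrix.mulVec, dotProduct, Finset.sum_apply] using this
      have : Dm⁻¹.mulVec (Dm.mulVec (fun j => Z j k)) = fun j => Z j k := by
        rw [Matrix.mulVec_mulVec, Matrix.nonsing_inv_mul _ hdet, Matrix.one_mulVec]
      rw [← this, hmv]
    have hcb : ∀ j k, |((A j).mulVec (Z j) + b' j) k| ≤ s / 4 + γ := by
      intro j k
      have h1 : |(A j).mulVec (Z j) k| ≤ s / 4 := by
        have : |∑ l, A j k l * Z j l| ≤ ∑ l, |A j k l| * s := by
          refine (Finset.abs_sum_le_sum_abs _ _).trans (Finset.sum_le_sum fun l _ => ?_)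
          rw [abs_mul]
          exact mul_le_mul_of_nonneg_left (hsle j l) (abs_nonneg _)
        have h2 : ∑ l, |A j k l| * s ≤ 1 / 4 * s := by
          rw [← Finset.sum_mul]
          exact mul_le_mul_of_nonneg_right (hA j k) hs0
        simpa [Matrix.mulVec, dotProduct] using this.trans (by linarith)
      calc |((A j).mulVec (Z j) + b' j) k| ≤ |(A j).mulVec (Z j) k| + |b' j k| := by
            simpa using abs_add_le ((A j).mulVec (Z j) k) (b' j k)
        _ ≤ s / 4 + γ := add_le_add h1 (hb' j k)
    have hss : s ≤ 2 * (s / 4 + γ) := by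
      have h0 := congrFun (hrep p.2) p.1
      have h1 : |Z p.1 p.2| ≤ ∑ j, |Dm⁻¹ p.1 j| * (s / 4 + γ) := by
        rw [h0]
        simp only [Matrix.mulVec, dotProduct]
        refine (Finset.abs_sum_le_sum_abs _ _).trans (Finset.sum_le_sum fun j _ => ?_)
        rw [abs_mul]
        exact mul_le_mul_of_nonneg_left (hcb j p.2) (abs_nonneg _)
      have h2 : ∑ j, |Dm⁻¹ p.1 j| * (s / 4 + γ) ≤ 2 * (s / 4 + γ) := by
        rw [← Finset.sum_mul]
        exact mul_le_mul_of_nonneg_right (hDinv p.1) (by linarith)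
      exact le_trans h1 h2
    intro i k
    exact (hsle i k).trans (by linarith)
  -- the linear map
  let Φ : (Fin N → Fin n → ℝ) →ₗ[ℝ] (Fin N → Fin n → ℝ) :=
    { toFun := fun Z i => (∑ j, Dm i j • Z j) - (A i).mulVec (Z i)
      map_add' := by
        intro Y Z
        funext i
        simp [Matrix.mulVec_add, smul_add, Finset.sum_add_distrib]
        abel
      map_smul' := by
        intro c Z
        funext i
        simp [Matrix.mulVec_smul, Finset.smul_sum, smul_sub, smul_comm c] }
  have hinj : Function.Injective Φ := by
    rw [← LinearMap.ker_eq_bot, LinearMap.ker_eq_bot']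
    intro Z hZ
    have heq : ∀ i, ∑ j, Dm i j • Z j = (A i).mulVec (Z i) + (0 : Fin N → Fin n → ℝ) i := by
      intro i
      have := congrFun hZ i
      simp only [Φ, LinearMap.coe_mk, AddHom.coe_mk, Pi.zero_apply] at this ⊢
      rw [sub_eq_zero] at this
      simpa using this
    have := sbound Z 0 0 le_rfl (by simp) heq
    funext i k
    have h := this i k
    simpa using abs_nonpos_iff.mp (by simpa using h)
  have hsurj := LinearMap.injective_iff_surjective.mp hinj
  obtain ⟨Z, hZ⟩ := hsurj b
  have heq : ∀ i, ∑ j, Dm i j • Z j = (A i).mulVec (Z i) + b i := by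
    intro i
    have := congrFun hZ i
    simp only [Φ, LinearMap.coe_mk, AddHom.coe_mk] at this
    rw [sub_eq_iff_eq_add] at this
    rw [this]
    abel
  exact ⟨Z, heq, sbound Z b β hβ hb heq⟩

end QPHelpers
section QPHelpers2

lemma cons_injective {N : ℕ} (τ : Fin N → ℝ) (hmono : StrictMono τ) (hgt : ∀ i, -1 < τ i) :
    Function.Injective (Fin.cons (-1 : ℝ) τ : Fin (N + 1) → ℝ) := by
  intro a b hab
  induction a using Fin.cases with
  | zero =>
    induction b using Fin.cases with
    | zero => rfl
    | succ j =>
      rw [Fin.cons_zero, Fin.cons_succ] at hab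
      exact absurd hab (ne_of_lt (hgt j))
  | succ i =>
    induction b using Fin.cases with
    | zero =>
      rw [Fin.cons_zero, Fin.cons_succ] at hab
      exact absurd hab.symm (ne_of_lt (hgt i))
    | succ j =>
      rw [Fin.cons_succ, Fin.cons_succ] at hab
      rw [hmono.injective hab]

lemma diffMat_rowsum {N : ℕ} (σ : Fin (N + 1) → ℝ) (hσ : Function.Injective σ) (i : Fin N) :
    ∑ j, diffMat N σ i j = 0 := by
  have h1 : ∑ j, Lagrange.basis Finset.univ σ j = 1 :=
    Lagrange.sum_basis (Set.injOn_of_injective hσ) ⟨0, Finset.mem_univ 0⟩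
  simp only [diffMat]
  rw [← Polynomial.eval_finset_sum, ← map_sum, h1]
  simp

lemma hessXX_bound {n m : ℕ} (f : (Fin n → ℝ) → (Fin m → ℝ) → Fin n → ℝ)
    (xs : ℝ → Fin n → ℝ) (us : ℝ → Fin m → ℝ) (lams : ℝ → Fin n → ℝ)
    (hf : ∃ Ω : Set ((Fin n → ℝ) × (Fin m → ℝ)), IsOpen Ω ∧
      (∀ t ∈ Icc (-1:ℝ) 1, (xs t, us t) ∈ Ω) ∧
      ContDiffOn ℝ 2 (fun p : (Fin n → ℝ) × (Fin m → ℝ) => f p.1 p.2) Ω)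
    (hxcont : ContinuousOn xs (Icc (-1:ℝ) 1))
    (hucont : ContinuousOn us (Icc (-1:ℝ) 1))
    (hlams : ContinuousOn lams (Icc (-1:ℝ) 1)) :
    ∃ MQ : ℝ, 0 ≤ MQ ∧ ∀ t ∈ Icc (-1:ℝ) 1, ∀ k l,
      |hessXX f (xs t) (us t) (lams t) k l| ≤ MQ := by
  obtain ⟨Ω, hΩo, hΩm, hF⟩ := hf
  have hFj : ∀ j : Fin n, ContDiffOn ℝ 2 (fun p : (Fin n → ℝ) × (Fin m → ℝ) => f p.1 p.2 j) Ω :=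
    fun j => contDiffOn_pi.1 hF j
  set g : Fin n → Fin n → ((Fin n → ℝ) × (Fin m → ℝ)) → ℝ := fun j l p =>
    fderiv ℝ (fun q : (Fin n → ℝ) × (Fin m → ℝ) => f q.1 q.2 j) p
      (Pi.single l 1, (0 : Fin m → ℝ)) with hgdef
  have hg : ∀ j l, ContDiffOn ℝ 1 (g j l) Ω := fun j l =>
    ((hFj j).fderiv_of_isOpen hΩo (by norm_num)).clm_apply contDiffOn_const
  set φ : Fin n → Fin n → Fin n → ((Fin n → ℝ) × (Fin m → ℝ)) → ℝ := fun j k l p =>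
    fderiv ℝ (g j l) p (Pi.single k 1, (0 : Fin m → ℝ)) with hφdef
  have hφc : ∀ j k l, ContinuousOn (φ j k l) Ω := fun j k l =>
    ((hg j l).continuousOn_fderiv_of_isOpen hΩo le_rfl).clm_apply continuousOn_const
  -- the identity
  have hid : ∀ t ∈ Icc (-1:ℝ) 1, ∀ k l,
      hessXX f (xs t) (us t) (lams t) k l = ∑ j, lams t j * φ j k l (xs t, us t) := by
    intro t ht k l
    have hpΩ : (xs t, us t) ∈ Ω := hΩm t ht
    -- step A, at points x' near xs t
    have stepA : ∀ x' : Fin n → ℝ, (x', us t) ∈ Ω →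
        gradxH f x' (us t) (lams t) l = ∑ j, lams t j * g j l (x', us t) := by
      intro x' hx'
      have hder : ∀ j : Fin n, HasFDerivAt (fun x'' => lams t j * f x'' (us t) j)
          (lams t j • ((fderiv ℝ (fun q : (Fin n → ℝ) × (Fin m → ℝ) => f q.1 q.2 j) (x', us t)).comp
            (ContinuousLinearMap.inl ℝ (Fin n → ℝ) (Fin m → ℝ)))) x' := by
        intro j
        have hdiff : DifferentiableAt ℝ (fun q : (Fin n → ℝ) × (Fin m → ℝ) => f q.1 q.2 j)
            (x', us t) :=
          ((hFj j).differentiableOn (by norm_num)).differentiableAt (hΩo.mem_nhds hx')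
        exact ((hdiff.hasFDerivAt).comp x' (hasFDerivAt_prodMk_left (𝕜 := ℝ) x' (us t))).const_mul _
      have hsum : HasFDerivAt (fun x'' => ham f x'' (us t) (lams t))
          (∑ j, lams t j • ((fderiv ℝ (fun q : (Fin n → ℝ) × (Fin m → ℝ) => f q.1 q.2 j) (x', us t)).comp
            (ContinuousLinearMap.inl ℝ (Fin n → ℝ) (Fin m → ℝ)))) x' := by
        have := HasFDerivAt.fun_sum (fun j (_ : j ∈ Finset.univ) => hder j)
        simpa [ham] using this
      rw [gradxH, pgrad, hsum.fderiv]
      simp [hgdef, ContinuousLinearMap.sum_apply]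
    -- step B
    have hV : IsOpen {x' : Fin n → ℝ | (x', us t) ∈ Ω} :=
      hΩo.preimage (continuous_id.prodMk continuous_const)
    have hev : (fun x' => gradxH f x' (us t) (lams t) l) =ᶠ[nhds (xs t)]
        (fun x' => ∑ j, lams t j * g j l (x', us t)) := by
      filter_upwards [hV.mem_nhds hpΩ] with x' hx' using stepA x' hx'
    have hder2 : ∀ j : Fin n, HasFDerivAt (fun x' : Fin n → ℝ => lams t j * g j l (x', us t))
        (lams t j • ((fderiv ℝ (g j l) (xs t, us t)).comp
          (ContinuousLinearMap.inl ℝ (Fin n → ℝ) (Fin m → ℝ)))) (xs t) := by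
      intro j
      have hdiff : DifferentiableAt ℝ (g j l) (xs t, us t) :=
        ((hg j l).differentiableOn (by norm_num)).differentiableAt (hΩo.mem_nhds hpΩ)
      exact ((hdiff.hasFDerivAt).comp (xs t) (hasFDerivAt_prodMk_left (𝕜 := ℝ) (xs t) (us t))).const_mul _
    have hsum2 : HasFDerivAt (fun x' : Fin n → ℝ => ∑ j, lams t j * g j l (x', us t))
        (∑ j, lams t j • ((fderiv ℝ (g j l) (xs t, us t)).comp
          (ContinuousLinearMap.inl ℝ (Fin n → ℝ) (Fin m → ℝ)))) (xs t) :=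
      HasFDerivAt.fun_sum (fun j (_ : j ∈ Finset.univ) => hder2 j)
    have : hessXX f (xs t) (us t) (lams t) k l =
        fderiv ℝ (fun x' => ∑ j, lams t j * g j l (x', us t)) (xs t) (Pi.single k 1) := by
      rw [hessXX, hev.fderiv_eq]
    rw [this, hsum2.fderiv]
    simp [hφdef, ContinuousLinearMap.sum_apply]
  -- continuity and compactness
  have hcont : ContinuousOn (fun t => (fun k l => ∑ j, lams t j * φ j k l (xs t, us t) :
      Fin n → Fin n → ℝ)) (Icc (-1:ℝ) 1) := by
    refine continuousOn_pi.2 fun k => continuousOn_pi.2 fun l => ?_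
    refine continuousOn_finset_sum _ fun j _ => ContinuousOn.mul ?_ ?_
    · exact (continuous_apply j).comp_continuousOn hlams
    · exact (hφc j k l).comp (hxcont.prodMk hucont) fun t ht => hΩm t ht
  set F : ℝ → Fin n → Fin n → ℝ := fun t k l => ∑ j, lams t j * φ j k l (xs t, us t) with hFdef
  obtain ⟨M0, hM0⟩ := isCompact_Icc.exists_bound_of_continuousOn hcont
  refine ⟨max M0 0, le_max_right _ _, fun t ht k l => ?_⟩
  rw [hid t ht k l]
  have hA : |F t k l| ≤ ‖F t k‖ := by
    simpa [Real.norm_eq_abs] using norm_le_pi_norm (F t k) l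
  have hB : ‖F t k‖ ≤ ‖F t‖ := norm_le_pi_norm (F t) k
  exact ((hA.trans hB).trans (hM0 t ht)).trans (le_max_left _ _)

end QPHelpers2
section QPHelpers3

lemma sum2_abs_le {n1 n2 : ℕ} (q : Fin n1 → Fin n2 → ℝ) (c : ℝ)
    (h : ∀ k l, |q k l| ≤ c) : |∑ k, ∑ l, q k l| ≤ n1 * n2 * c := by
  calc |∑ k, ∑ l, q k l| ≤ ∑ k, |∑ l, q k l| := Finset.abs_sum_le_sum_abs _ _
    _ ≤ ∑ k, ∑ l, |q k l| :=
        Finset.sum_le_sum fun k _ => Finset.abs_sum_le_sum_abs _ _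
    _ ≤ ∑ _k : Fin n1, ∑ _l : Fin n2, c :=
        Finset.sum_le_sum fun k _ => Finset.sum_le_sum fun l _ => h k l
    _ = n1 * n2 * c := by
        simp [Finset.sum_const, nsmul_eq_mul, mul_assoc]

lemma sum1_abs_le {n1 : ℕ} (q : Fin n1 → ℝ) (c : ℝ)
    (h : ∀ k, |q k| ≤ c) : |∑ k, q k| ≤ n1 * c := by
  calc |∑ k, q k| ≤ ∑ k, |q k| := Finset.abs_sum_le_sum_abs _ _
    _ ≤ ∑ _k : Fin n1, c := Finset.sum_le_sum fun k _ => h k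
    _ = n1 * c := by simp [Finset.sum_const, nsmul_eq_mul]

end QPHelpers3

/-- ω-norm bounds, Lemma 5.1.  Under (A2), (A3) and (P1),
there is a constant `c` independent of `N` such that for every `N` and every
right-hand side `y`, any solution `(X,U)` of the quadratic program (QP)
satisfies `‖X‖_ω ≤ c‖y‖_∞` and `‖U‖_ω ≤ c‖y‖_∞`. -/
theorem qp_omega_norm_bound
    (n m : ℕ)
    (f : (Fin n → ℝ) → (Fin m → ℝ) → Fin n → ℝ) (C : (Fin n → ℝ) → ℝ)
    (x0 : Fin n → ℝ)
    (xs : ℝ → Fin n → ℝ) (us : ℝ → Fin m → ℝ) (lams : ℝ → Fin n → ℝ)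
    -- smoothness of the data near the solution
    (hf : ∃ Ω : Set ((Fin n → ℝ) × (Fin m → ℝ)), IsOpen Ω ∧
      (∀ t ∈ Icc (-1:ℝ) 1, (xs t, us t) ∈ Ω) ∧
      ContDiffOn ℝ 2 (fun p : (Fin n → ℝ) × (Fin m → ℝ) => f p.1 p.2) Ω)
    (hC : ∃ V : Set (Fin n → ℝ), IsOpen V ∧ xs 1 ∈ V ∧ ContDiffOn ℝ 2 C V)
    -- (x*, u*) is feasible in (P)
    (hxcont : ContinuousOn xs (Icc (-1:ℝ) 1))
    (hucont : ContinuousOn us (Icc (-1:ℝ) 1))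
    (hdyn : ∀ t ∈ Icc (-1:ℝ) 1,
      HasDerivWithinAt xs (f (xs t) (us t)) (Icc (-1:ℝ) 1) t)
    (hx0 : xs (-1) = x0)
    -- (x*, u*) is a local minimizer of (P) with respect to the sup-norm
    (hmin : ∃ ε > 0, ∀ (x : ℝ → Fin n → ℝ) (u : ℝ → Fin m → ℝ),
      ContinuousOn x (Icc (-1:ℝ) 1) → ContinuousOn u (Icc (-1:ℝ) 1) →
      (∀ t ∈ Icc (-1:ℝ) 1,
        HasDerivWithinAt x (f (x t) (u t)) (Icc (-1:ℝ) 1) t) →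
      x (-1) = x0 →
      (∀ t ∈ Icc (-1:ℝ) 1,
        enorm' (x t - xs t) ≤ ε ∧ enorm' (u t - us t) ≤ ε) →
      C (xs 1) ≤ C (x 1))
    -- λ* solves the costate equation
    (hcostate : ∀ t ∈ Icc (-1:ℝ) 1,
      HasDerivWithinAt lams (-(gradxH f (xs t) (us t) (lams t))) (Icc (-1:ℝ) 1) t)
    (hlam1 : lams 1 = pgrad C (xs 1))
    -- (A2): coercivity
    (α : ℝ) (hα : 0 < α)
    (hA2C : ∀ v : Fin n → ℝ, v ≠ 0 →
      α * (∑ k, v k ^ 2) < ∑ k, ∑ l, v k * hessC C (xs 1) k l * v l)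
    (hA2H : ∀ t ∈ Icc (-1:ℝ) 1, ∀ (v : Fin n → ℝ) (w : Fin m → ℝ), (v, w) ≠ 0 →
      α * ((∑ k, v k ^ 2) + ∑ l, w l ^ 2) <
        (∑ k, ∑ l, v k * hessXX f (xs t) (us t) (lams t) k l * v l) +
        2 * (∑ k, ∑ l, v k * hessXU f (xs t) (us t) (lams t) k l * w l) +
        ∑ k, ∑ l, w k * hessUU f (xs t) (us t) (lams t) k l * w l)
    -- (A3): Jacobian bound in the matrix sup-norm (max absolute row sum)
    (hA3 : ∀ t ∈ Icc (-1:ℝ) 1,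
      (∀ k, ∑ l, |jacX f (xs t) (us t) k l| ≤ 1 / 4) ∧
      (∀ l, ∑ k, |jacX f (xs t) (us t) k l| ≤ 1 / 4))
    -- for each N ≥ 2, a Radau quadrature rule of order N satisfying (P1)
    (τ ω : ∀ N : ℕ, Fin N → ℝ)
    (hrad : ∀ N, 2 ≤ N → IsRadauRule N (τ N) (ω N))
    (hP1 : ∀ N, 2 ≤ N → IsUnit (diffMat1N N (Fin.cons (-1) (τ N))))
    (hP1norm : ∀ N, 2 ≤ N → ∀ i : Fin N,
      ∑ j, |(diffMat1N N (Fin.cons (-1) (τ N)))⁻¹ i j| ≤ 2) :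
    ∃ c : ℝ, ∀ (N : ℕ) (hN : 2 ≤ N),
      ∀ (y1 : Fin N → Fin n → ℝ) (y2 y3 : Fin n → ℝ)
        (y4 : Fin N → Fin n → ℝ) (y6 : Fin N → Fin m → ℝ)
        (X : Fin (N + 1) → Fin n → ℝ) (U : Fin N → Fin m → ℝ),
      qpFeasible n m N f xs us (τ N) y1 y2 X U →
      (∀ (X' : Fin (N + 1) → Fin n → ℝ) (U' : Fin N → Fin m → ℝ),
        qpFeasible n m N f xs us (τ N) y1 y2 X' U' →
        qpObjective n m N f C xs us lams (τ N) (ω N) y3 y4 y6 X U ≤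
          qpObjective n m N f C xs us lams (τ N) (ω N) y3 y4 y6 X' U') →
      Real.sqrt ((∑ k, X (Fin.last N) k ^ 2) +
          ∑ i : Fin N, ω N i * ∑ k, X i.succ k ^ 2) ≤
        c * max (⨆ i, enorm' (y1 i)) (max (enorm' y2) (max (enorm' y3)
          (max (⨆ i, enorm' (y4 i)) (⨆ i, enorm' (y6 i))))) ∧
      Real.sqrt (∑ i : Fin N, ω N i * ∑ l, U i l ^ 2) ≤
        c * max (⨆ i, enorm' (y1 i)) (max (enorm' y2) (max (enorm' y3)
          (max (⨆ i, enorm' (y4 i)) (⨆ i, enorm' (y6 i))))) := by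

  classical
  have hlamscont : ContinuousOn lams (Icc (-1:ℝ) 1) :=
    fun t ht => (hcostate t ht).continuousWithinAt
  obtain ⟨MQ, hMQ0, hMQ⟩ := hessXX_bound f xs us lams hf hxcont hucont hlamscont
  set MT : ℝ := ‖(fun k l => hessC C (xs 1) k l : Fin n → Fin n → ℝ)‖ with hMTdef
  have hMT0 : 0 ≤ MT := norm_nonneg _
  have hMT : ∀ k l, |hessC C (xs 1) k l| ≤ MT := by
    intro k l
    have hA : |hessC C (xs 1) k l| ≤ ‖(fun l' => hessC C (xs 1) k l' : Fin n → ℝ)‖ := by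
      simpa [Real.norm_eq_abs] using
        norm_le_pi_norm (fun l' => hessC C (xs 1) k l' : Fin n → ℝ) l
    exact hA.trans (norm_le_pi_norm (fun k l => hessC C (xs 1) k l : Fin n → Fin n → ℝ) k)
  set K : ℝ := 18 * (n:ℝ)^2 * MT + 36 * (n:ℝ)^2 * MQ + 15 * (n:ℝ) + 3 * (n:ℝ) with hKdef
  have hK0 : 0 ≤ K := by rw [hKdef]; positivity
  refine ⟨Real.sqrt (4 / α * (K + 8 / α)), ?_⟩
  intro N hN y1 y2 y3 y4 y6 X U hfeas hopt
  obtain ⟨hmono, hgt, hle, -, hωpos, hquad⟩ := hrad N hN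
  have hNpos : 0 < N := by omega
  haveI : Nonempty (Fin N) := ⟨⟨0, hNpos⟩⟩
  have hτIcc : ∀ i, τ N i ∈ Icc (-1:ℝ) 1 := fun i => ⟨le_of_lt (hgt i), hle i⟩
  have hω0 : ∀ i, 0 ≤ ω N i := fun i => le_of_lt (hωpos i)
  have hsumω : ∑ i, ω N i = 2 := by
    have hdeg : (1 : Polynomial ℝ).degree ≤ (2 * N - 2 : ℕ) := by
      rw [Polynomial.degree_one]
      exact_mod_cast Nat.zero_le _
    have h := hquad 1 hdeg
    simp only [Polynomial.eval_one, mul_one, intervalIntegral.integral_const,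
      smul_eq_mul] at h
    rw [← h]; norm_num
  set Y := max (⨆ i, enorm' (y1 i)) (max (enorm' y2) (max (enorm' y3)
      (max (⨆ i, enorm' (y4 i)) (⨆ i, enorm' (y6 i))))) with hYdef
  have hy1e : ∀ i, enorm' (y1 i) ≤ Y := fun i =>
    (le_ciSup (f := fun i => enorm' (y1 i))
      (Set.Finite.bddAbove (Set.finite_range _)) i).trans (le_max_left _ _)
  have hy2e : enorm' y2 ≤ Y := le_max_of_le_right (le_max_left _ _)
  have hy3e : enorm' y3 ≤ Y := le_max_of_le_right (le_max_of_le_right (le_max_left _ _))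
  have hy4e : ∀ i, enorm' (y4 i) ≤ Y := fun i =>
    (le_ciSup (f := fun i => enorm' (y4 i))
      (Set.Finite.bddAbove (Set.finite_range _)) i).trans
      (le_max_of_le_right (le_max_of_le_right (le_max_of_le_right (le_max_left _ _))))
  have hy6e : ∀ i, enorm' (y6 i) ≤ Y := fun i =>
    (le_ciSup (f := fun i => enorm' (y6 i))
      (Set.Finite.bddAbove (Set.finite_range _)) i).trans
      (le_max_of_le_right (le_max_of_le_right (le_max_of_le_right (le_max_right _ _))))
  have hY0 : 0 ≤ Y := (enorm'_nonneg y2).trans hy2e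
  have hy1b : ∀ i k, |y1 i k| ≤ Y := fun i k => (abs_le_enorm' _ k).trans (hy1e i)
  have hy2b : ∀ k, |y2 k| ≤ Y := fun k => (abs_le_enorm' _ k).trans hy2e
  have hy3b : ∀ k, |y3 k| ≤ Y := fun k => (abs_le_enorm' _ k).trans hy3e
  have hy4b : ∀ i k, |y4 i k| ≤ Y := fun i k => (abs_le_enorm' _ k).trans (hy4e i)
  have hσinj : Function.Injective (Fin.cons (-1:ℝ) (τ N) : Fin (N+1) → ℝ) :=
    cons_injective (τ N) hmono hgt
  -- build the comparison feasible point
  have hArow : ∀ i k, ∑ l, |jacX f (xs (τ N i)) (us (τ N i)) k l| ≤ 1/4 :=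
    fun i k => (hA3 (τ N i) (hτIcc i)).1 k
  have hbb : ∀ i k, |((jacX f (xs (τ N i)) (us (τ N i))).mulVec y2 + y1 i) k| ≤ 5/4 * Y := by
    intro i k
    have h1 : |(jacX f (xs (τ N i)) (us (τ N i))).mulVec y2 k| ≤ 1/4 * Y := by
      have e : (jacX f (xs (τ N i)) (us (τ N i))).mulVec y2 k
          = ∑ l, jacX f (xs (τ N i)) (us (τ N i)) k l * y2 l := by
        simp [Matrix.mulVec, dotProduct]
      rw [e]
      calc |∑ l, jacX f (xs (τ N i)) (us (τ N i)) k l * y2 l|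
          ≤ ∑ l, |jacX f (xs (τ N i)) (us (τ N i)) k l| * Y := by
            refine (Finset.abs_sum_le_sum_abs _ _).trans (Finset.sum_le_sum fun l _ => ?_)
            rw [abs_mul]
            exact mul_le_mul_of_nonneg_left (hy2b l) (abs_nonneg _)
        _ ≤ 1/4 * Y := by
            rw [← Finset.sum_mul]
            exact mul_le_mul_of_nonneg_right (hArow i k) hY0
    calc |((jacX f (xs (τ N i)) (us (τ N i))).mulVec y2 + y1 i) k|
        ≤ |(jacX f (xs (τ N i)) (us (τ N i))).mulVec y2 k| + |y1 i k| := by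
          simpa using abs_add_le ((jacX f (xs (τ N i)) (us (τ N i))).mulVec y2 k) (y1 i k)
      _ ≤ 1/4 * Y + Y := add_le_add h1 (hy1b i k)
      _ = 5/4 * Y := by ring
  obtain ⟨Z, hZeq0, hZb⟩ := solve_linear (diffMat1N N (Fin.cons (-1) (τ N))) (hP1 N hN)
    (hP1norm N hN) (fun i => jacX f (xs (τ N i)) (us (τ N i))) hArow
    (fun i => (jacX f (xs (τ N i)) (us (τ N i))).mulVec y2 + y1 i) (5/4 * Y)
    (by linarith) hbb
  have hZeq : ∀ i, ∑ j, diffMat1N N (Fin.cons (-1) (τ N)) i j • Z j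
      = (jacX f (xs (τ N i)) (us (τ N i))).mulVec (Z i)
        + ((jacX f (xs (τ N i)) (us (τ N i))).mulVec y2 + y1 i) := hZeq0
  have hZb5 : ∀ i k, |Z i k| ≤ 5 * Y := fun i k => by have := hZb i k; linarith
  set Xb : Fin (N+1) → Fin n → ℝ := Fin.cons y2 (fun i => Z i + y2) with hXbdef
  have hXb0 : Xb 0 = y2 := by rw [hXbdef]; exact Fin.cons_zero _ _
  have hXbsucc : ∀ j : Fin N, Xb j.succ = Z j + y2 := fun j => by
    rw [hXbdef]; exact Fin.cons_succ _ _ _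
  have hXbb : ∀ j k, |Xb j k| ≤ 6 * Y := by
    intro j k
    induction j using Fin.cases with
    | zero =>
      rw [hXb0]
      exact (hy2b k).trans (by linarith)
    | succ i =>
      rw [hXbsucc i]
      calc |(Z i + y2) k| ≤ |Z i k| + |y2 k| := by simpa using abs_add_le (Z i k) (y2 k)
        _ ≤ 5 * Y + Y := add_le_add (hZb5 i k) (hy2b k)
        _ = 6 * Y := by ring
  have hfeas' : qpFeasible n m N f xs us (τ N) y1 y2 Xb (0 : Fin N → Fin m → ℝ) := by
    refine ⟨fun i => ?_, hXb0⟩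
    have hzero : diffMat N (Fin.cons (-1) (τ N)) i 0
        + ∑ j : Fin N, diffMat N (Fin.cons (-1) (τ N)) i j.succ = 0 := by
      have h := diffMat_rowsum (Fin.cons (-1) (τ N)) hσinj i
      rwa [Fin.sum_univ_succ] at h
    have hsplit : ∑ j : Fin (N+1), diffMat N (Fin.cons (-1) (τ N)) i j • Xb j
        = (∑ j : Fin N, diffMat1N N (Fin.cons (-1) (τ N)) i j • Z j)
          + (diffMat N (Fin.cons (-1) (τ N)) i 0
            + ∑ j : Fin N, diffMat N (Fin.cons (-1) (τ N)) i j.succ) • y2 := by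
      rw [Fin.sum_univ_succ, hXb0]
      simp only [hXbsucc, smul_add, Finset.sum_add_distrib, add_smul, Finset.sum_smul,
        diffMat1N]
      abel
    rw [hsplit, hzero, zero_smul, add_zero, hZeq i, hXbsucc i]
    simp only [Pi.zero_apply, Matrix.mulVec_zero, add_zero, Matrix.mulVec_add]
    abel
  -- bound on the linear term with y2
  have hterm1 : |∑ k, y2 k * (y3 k + ∑ i, ω N i * y4 i k)| ≤ 3 * (n:ℝ) * Y^2 := by
    have hk : ∀ k, |y2 k * (y3 k + ∑ i, ω N i * y4 i k)| ≤ Y * (3 * Y) := by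
      intro k
      rw [abs_mul]
      refine mul_le_mul (hy2b k) ?_ (abs_nonneg _) hY0
      calc |y3 k + ∑ i, ω N i * y4 i k| ≤ |y3 k| + |∑ i, ω N i * y4 i k| := abs_add_le _ _
        _ ≤ Y + 2 * Y := by
            refine add_le_add (hy3b k) ?_
            calc |∑ i, ω N i * y4 i k| ≤ ∑ i, ω N i * Y := by
                  refine (Finset.abs_sum_le_sum_abs _ _).trans
                    (Finset.sum_le_sum fun i _ => ?_)
                  rw [abs_mul, abs_of_nonneg (hω0 i)]
                  exact mul_le_mul_of_nonneg_left (hy4b i k) (hω0 i)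
              _ = 2 * Y := by rw [← Finset.sum_mul, hsumω]
        _ = 3 * Y := by ring
    calc |∑ k, y2 k * (y3 k + ∑ i, ω N i * y4 i k)| ≤ (n:ℝ) * (Y * (3*Y)) :=
          sum1_abs_le _ _ hk
      _ = 3 * (n:ℝ) * Y^2 := by ring
  -- bound the objective at (Xb, 0)
  have h6Y0 : (0:ℝ) ≤ 6 * Y := by linarith
  have hJXb : qpObjective n m N f C xs us lams (τ N) (ω N) y3 y4 y6 Xb
      (0 : Fin N → Fin m → ℝ)
      ≤ (18 * (n:ℝ)^2 * MT + 36 * (n:ℝ)^2 * MQ + 15 * (n:ℝ)) * Y^2 := by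
    simp only [qpObjective, Pi.zero_apply, mul_zero, zero_mul, Finset.sum_const_zero,
      add_zero]
    rw [hXb0]
    have hT : |∑ k, ∑ l, Xb (Fin.last N) k * hessC C (xs 1) k l * Xb (Fin.last N) l|
        ≤ (n:ℝ) * n * (6*Y*MT*(6*Y)) := by
      refine sum2_abs_le _ _ fun k l => ?_
      rw [abs_mul, abs_mul]
      exact mul_le_mul (mul_le_mul (hXbb _ k) (hMT k l) (abs_nonneg _) h6Y0)
        (hXbb _ l) (abs_nonneg _) (mul_nonneg h6Y0 hMT0)
    have hQsum : ∑ i, ω N i * (∑ k, ∑ l, Xb i.succ k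
          * hessXX f (xs (τ N i)) (us (τ N i)) (lams (τ N i)) k l * Xb i.succ l)
        ≤ 2 * ((n:ℝ) * n * (6*Y*MQ*(6*Y))) := by
      calc ∑ i, ω N i * (∑ k, ∑ l, Xb i.succ k
            * hessXX f (xs (τ N i)) (us (τ N i)) (lams (τ N i)) k l * Xb i.succ l)
          ≤ ∑ i, ω N i * ((n:ℝ) * n * (6*Y*MQ*(6*Y))) := by
            refine Finset.sum_le_sum fun i _ => mul_le_mul_of_nonneg_left ?_ (hω0 i)
            refine le_of_abs_le (sum2_abs_le _ _ fun k l => ?_)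
            rw [abs_mul, abs_mul]
            exact mul_le_mul (mul_le_mul (hXbb _ k) (hMQ (τ N i) (hτIcc i) k l)
              (abs_nonneg _) h6Y0) (hXbb _ l) (abs_nonneg _) (mul_nonneg h6Y0 hMQ0)
        _ = 2 * ((n:ℝ) * n * (6*Y*MQ*(6*Y))) := by rw [← Finset.sum_mul, hsumω]
    have hB : |∑ i, ω N i * ∑ k, y4 i k * Xb i.succ k| ≤ 2 * ((n:ℝ) * (Y * (6*Y))) := by
      calc |∑ i, ω N i * ∑ k, y4 i k * Xb i.succ k|
          ≤ ∑ i, ω N i * ((n:ℝ) * (Y * (6*Y))) := by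
            refine (Finset.abs_sum_le_sum_abs _ _).trans (Finset.sum_le_sum fun i _ => ?_)
            rw [abs_mul, abs_of_nonneg (hω0 i)]
            refine mul_le_mul_of_nonneg_left ?_ (hω0 i)
            refine sum1_abs_le _ _ fun k => ?_
            rw [abs_mul]
            exact mul_le_mul (hy4b i k) (hXbb _ k) (abs_nonneg _) hY0
        _ = 2 * ((n:ℝ) * (Y * (6*Y))) := by rw [← Finset.sum_mul, hsumω]
    have e1 := le_of_abs_le hT
    have e2 := le_of_abs_le hterm1
    have e3 := (abs_le.mp hB).1
    linarith [hQsum, e1, e2, e3]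
  -- coercivity
  have hTpos : α * (∑ k, X (Fin.last N) k ^ 2)
      ≤ ∑ k, ∑ l, X (Fin.last N) k * hessC C (xs 1) k l * X (Fin.last N) l := by
    rcases eq_or_ne (X (Fin.last N)) 0 with h0 | hne
    · rw [h0]; simp
    · exact le_of_lt (hA2C _ hne)
  have hHpos : ∀ i : Fin N, α * ((∑ k, X i.succ k ^ 2) + ∑ l, U i l ^ 2)
      ≤ (∑ k, ∑ l, X i.succ k
            * hessXX f (xs (τ N i)) (us (τ N i)) (lams (τ N i)) k l * X i.succ l)
        + 2 * (∑ k, ∑ l, X i.succ k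
            * hessXU f (xs (τ N i)) (us (τ N i)) (lams (τ N i)) k l * U i l)
        + ∑ k, ∑ l, U i k
            * hessUU f (xs (τ N i)) (us (τ N i)) (lams (τ N i)) k l * U i l := by
    intro i
    rcases eq_or_ne (X i.succ, U i) 0 with h0 | hne
    · have h1 : X i.succ = 0 := congrArg Prod.fst h0
      have h2 : U i = 0 := congrArg Prod.snd h0
      rw [h1, h2]; simp
    · exact le_of_lt (hA2H (τ N i) (hτIcc i) (X i.succ) (U i) hne)
  have hco : α * (((∑ k, X (Fin.last N) k ^ 2) + ∑ i, ω N i * ∑ k, X i.succ k ^ 2)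
        + ∑ i, ω N i * ∑ l, U i l ^ 2)
      ≤ (∑ k, ∑ l, X (Fin.last N) k * hessC C (xs 1) k l * X (Fin.last N) l)
        + ∑ i, ω N i * ((∑ k, ∑ l, X i.succ k
            * hessXX f (xs (τ N i)) (us (τ N i)) (lams (τ N i)) k l * X i.succ l)
          + 2 * (∑ k, ∑ l, X i.succ k
            * hessXU f (xs (τ N i)) (us (τ N i)) (lams (τ N i)) k l * U i l)
          + ∑ k, ∑ l, U i k
            * hessUU f (xs (τ N i)) (us (τ N i)) (lams (τ N i)) k l * U i l) := by
    have h1 : ∑ i, ω N i * (α * ((∑ k, X i.succ k ^ 2) + ∑ l, U i l ^ 2))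
        ≤ ∑ i, ω N i * ((∑ k, ∑ l, X i.succ k
            * hessXX f (xs (τ N i)) (us (τ N i)) (lams (τ N i)) k l * X i.succ l)
          + 2 * (∑ k, ∑ l, X i.succ k
            * hessXU f (xs (τ N i)) (us (τ N i)) (lams (τ N i)) k l * U i l)
          + ∑ k, ∑ l, U i k
            * hessUU f (xs (τ N i)) (us (τ N i)) (lams (τ N i)) k l * U i l) :=
      Finset.sum_le_sum fun i _ => mul_le_mul_of_nonneg_left (hHpos i) (hω0 i)
    have h2 : ∑ i, ω N i * (α * ((∑ k, X i.succ k ^ 2) + ∑ l, U i l ^ 2))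
        = α * (∑ i, ω N i * ∑ k, X i.succ k ^ 2)
          + α * (∑ i, ω N i * ∑ l, U i l ^ 2) := by
      rw [Finset.mul_sum, Finset.mul_sum, ← Finset.sum_add_distrib]
      exact Finset.sum_congr rfl fun i _ => by ring
    rw [h2] at h1
    nlinarith [hTpos, h1]
  -- nonnegativity facts
  have hXN0 : (0:ℝ) ≤ ∑ k, X (Fin.last N) k ^ 2 :=
    Finset.sum_nonneg fun k _ => sq_nonneg _
  have hPX20 : (0:ℝ) ≤ ∑ i, ω N i * ∑ k, X i.succ k ^ 2 :=
    Finset.sum_nonneg fun i _ =>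
      mul_nonneg (hω0 i) (Finset.sum_nonneg fun k _ => sq_nonneg _)
  have hPU0 : (0:ℝ) ≤ ∑ i, ω N i * ∑ l, U i l ^ 2 :=
    Finset.sum_nonneg fun i _ =>
      mul_nonneg (hω0 i) (Finset.sum_nonneg fun l _ => sq_nonneg _)
  set s : ℝ := Real.sqrt (((∑ k, X (Fin.last N) k ^ 2)
      + ∑ i, ω N i * ∑ k, X i.succ k ^ 2) + ∑ i, ω N i * ∑ l, U i l ^ 2) with hsdef
  have hs0 : 0 ≤ s := Real.sqrt_nonneg _
  have hs2 : s ^ 2 = ((∑ k, X (Fin.last N) k ^ 2)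
      + ∑ i, ω N i * ∑ k, X i.succ k ^ 2) + ∑ i, ω N i * ∑ l, U i l ^ 2 := by
    rw [hsdef]
    exact Real.sq_sqrt (by linarith)
  have hwX : ∑ i, ω N i * enorm' (X i.succ) ≤ Real.sqrt 2 * s := by
    have h1 := weighted_cs (ω N) (fun i => enorm' (X i.succ)) hω0
      (fun i => enorm'_nonneg _)
    have h2 : ∑ i, ω N i * enorm' (X i.succ) ^ 2 = ∑ i, ω N i * ∑ k, X i.succ k ^ 2 :=
      Finset.sum_congr rfl fun i _ => by
        rw [enorm', Real.sq_sqrt (Finset.sum_nonneg fun k _ => sq_nonneg _)]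
    rw [h2, hsumω] at h1
    refine h1.trans (mul_le_mul_of_nonneg_left ?_ (Real.sqrt_nonneg 2))
    rw [hsdef]
    exact Real.sqrt_le_sqrt (by linarith)
  have hwU : ∑ i, ω N i * enorm' (U i) ≤ Real.sqrt 2 * s := by
    have h1 := weighted_cs (ω N) (fun i => enorm' (U i)) hω0 (fun i => enorm'_nonneg _)
    have h2 : ∑ i, ω N i * enorm' (U i) ^ 2 = ∑ i, ω N i * ∑ l, U i l ^ 2 :=
      Finset.sum_congr rfl fun i _ => by
        rw [enorm', Real.sq_sqrt (Finset.sum_nonneg fun l _ => sq_nonneg _)]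
    rw [h2, hsumω] at h1
    refine h1.trans (mul_le_mul_of_nonneg_left ?_ (Real.sqrt_nonneg 2))
    rw [hsdef]
    exact Real.sqrt_le_sqrt (by linarith)
  have hLB : |∑ i, ω N i * ((∑ k, y4 i k * X i.succ k) + ∑ l, y6 i l * U i l)|
      ≤ 2 * Real.sqrt 2 * Y * s := by
    calc |∑ i, ω N i * ((∑ k, y4 i k * X i.succ k) + ∑ l, y6 i l * U i l)|
        ≤ ∑ i, ω N i * (Y * enorm' (X i.succ) + Y * enorm' (U i)) := by
          refine (Finset.abs_sum_le_sum_abs _ _).trans (Finset.sum_le_sum fun i _ => ?_)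
          rw [abs_mul, abs_of_nonneg (hω0 i)]
          refine mul_le_mul_of_nonneg_left ?_ (hω0 i)
          refine (abs_add_le _ _).trans (add_le_add ?_ ?_)
          · exact (cs_enorm' (y4 i) (X i.succ)).trans
              (mul_le_mul_of_nonneg_right (hy4e i) (enorm'_nonneg _))
          · exact (cs_enorm' (y6 i) (U i)).trans
              (mul_le_mul_of_nonneg_right (hy6e i) (enorm'_nonneg _))
      _ = Y * (∑ i, ω N i * enorm' (X i.succ)) + Y * (∑ i, ω N i * enorm' (U i)) := by
          rw [Finset.mul_sum, Finset.mul_sum, ← Finset.sum_add_distrib]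
          exact Finset.sum_congr rfl fun i _ => by ring
      _ ≤ Y * (Real.sqrt 2 * s) + Y * (Real.sqrt 2 * s) :=
          add_le_add (mul_le_mul_of_nonneg_left hwX hY0)
            (mul_le_mul_of_nonneg_left hwU hY0)
      _ = 2 * Real.sqrt 2 * Y * s := by ring
  -- optimality
  have hJle := hopt Xb (0 : Fin N → Fin m → ℝ) hfeas'
  have hJid : qpObjective n m N f C xs us lams (τ N) (ω N) y3 y4 y6 X U
      = 1 / 2 * ((∑ k, ∑ l, X (Fin.last N) k * hessC C (xs 1) k l * X (Fin.last N) l)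
        + ∑ i, ω N i * ((∑ k, ∑ l, X i.succ k
            * hessXX f (xs (τ N i)) (us (τ N i)) (lams (τ N i)) k l * X i.succ l)
          + 2 * (∑ k, ∑ l, X i.succ k
            * hessXU f (xs (τ N i)) (us (τ N i)) (lams (τ N i)) k l * U i l)
          + ∑ k, ∑ l, U i k
            * hessUU f (xs (τ N i)) (us (τ N i)) (lams (τ N i)) k l * U i l))
      + ((∑ k, X 0 k * (y3 k + ∑ i, ω N i * y4 i k))
        - ∑ i, ω N i * ((∑ k, y4 i k * X i.succ k) + ∑ l, y6 i l * U i l)) := rfl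
  rw [hJid, hfeas.2] at hJle
  have hmain : α / 2 * s ^ 2 ≤ K * Y ^ 2 + 2 * Real.sqrt 2 * Y * s := by
    rw [hs2]
    have e2 := (abs_le.mp hterm1).1
    have e3 := le_of_abs_le hLB
    linarith [hco, hJle, hJXb, e2, e3, hKdef.le, hKdef.ge]
  have hfinal := quad_solve hα hK0 hY0 hs0 hmain
  constructor
  · refine le_trans ?_ hfinal
    rw [hsdef]
    exact Real.sqrt_le_sqrt (by linarith)
  · refine le_trans ?_ hfinal
    rw [hsdef]
    exact Real.sqrt_le_sqrt (by linarith)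
end
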